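/- Let {a_0, a_1, ..., a_k} be consecutive occurrences of p in s forming an arithmetic progression with common difference c ≤ |p|, and for 0 ≤ j ≤ k let z_j = s[a_j + |p| .. |s|]. For any nonempty string x, writing α = per_R(p·z_0, c) − |p| and β = per_R(p·x, c) − |p|, if α − c·j ≠ β then lcp(z_j, x) = min{α − c·j, β}. -/

import Mathlib

/-- `w` is periodic with (positive) period candidate `c` (no upper bound on `c`). -/
def hasPer (w : List Char) (c : ℕ) : Prop :=
  0 < c ∧ ∀ j, j + c < w.length → w[j]? = w[j + c]?

/-- `c` is a period of `w`: `0 < c ≤ |w|` and `w[i] = w[i+c]` for all valid `i`. -/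
def hasPeriod (w : List Char) (c : ℕ) : Prop :=
  hasPer w c ∧ c ≤ w.length

/-- the substring `s[i..j]` (1-indexed, inclusive). -/
def sub (s : List Char) (i j : ℕ) : List Char :=
  (s.drop (i - 1)).take (j - i + 1)

/-- `p` occurs in `s` at (1-indexed) position `i`. -/
def occursAt (s p : List Char) (i : ℕ) : Prop :=
  1 ≤ i ∧ i + p.length ≤ s.length + 1 ∧ sub s i (i + p.length - 1) = p

/-- `u^k` -/
def listPow (u : List Char) (k : ℕ) : List Char := (List.replicate k u).flatten

/-- `u` is primitive: not of the form `v^k` with `k > 1`. -/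
def primitive (u : List Char) : Prop :=
  ¬ ∃ v k, 1 < k ∧ u = listPow v k

/-- `⟨b,e,c⟩` is a run of `s` (1-indexed). -/
def isRun (s : List Char) (b e c : ℕ) : Prop :=
  1 ≤ b ∧ b ≤ e ∧ e ≤ s.length ∧
  2 * c ≤ e - b + 1 ∧
  hasPeriod (sub s b e) c ∧
  (∀ c', hasPeriod (sub s b e) c' → c ≤ c') ∧
  (1 < b → ¬ hasPer (sub s (b - 1) e) c) ∧
  (e < s.length → ¬ hasPer (sub s b (e + 1)) c)

/-- length of the longest common prefix. -/
def lcp : List Char → List Char → ℕ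
  | a :: u, b :: v => if a = b then lcp u v + 1 else 0
  | _, _ => 0

/-- length of the longest common suffix. -/
def lcs (u v : List Char) : ℕ := lcp u.reverse v.reverse

/-- `per_R(w,c)`: length of the longest prefix of `w` having period `c`. -/
noncomputable def perR (w : List Char) (c : ℕ) : ℕ :=
  sSup {r | r ≤ w.length ∧ hasPer (w.take r) c}

/-- `per_L(w,c)`: length of the longest suffix of `w` having period `c`. -/
noncomputable def perL (w : List Char) (c : ℕ) : ℕ :=
  sSup {r | r ≤ w.length ∧ hasPer (w.drop (w.length - r)) c}


theorem lcp_nil_left (v : List Char) : lcp [] v = 0 := by cases v <;> rfl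
theorem lcp_nil_right (u : List Char) : lcp u [] = 0 := by cases u <;> rfl
theorem lcp_cons (a b : Char) (u v : List Char) :
    lcp (a :: u) (b :: v) = if a = b then lcp u v + 1 else 0 := rfl

theorem lcp_comm (u : List Char) : ∀ v, lcp u v = lcp v u := by
  induction u with
  | nil => intro v; rw [lcp_nil_left, lcp_nil_right]
  | cons a u ih =>
    intro v
    cases v with
    | nil => rw [lcp_nil_left, lcp_nil_right]
    | cons b v =>
      rw [lcp_cons, lcp_cons, ih]
      by_cases h : a = b
      · rw [if_pos h, if_pos h.symm]
      · rw [if_neg h, if_neg (fun hh => h hh.symm)]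

theorem lcp_le_left : ∀ u v : List Char, lcp u v ≤ u.length := by
  intro u
  induction u with
  | nil => intro v; rw [lcp_nil_left]; exact Nat.zero_le _
  | cons a u ih =>
    intro v
    cases v with
    | nil => rw [lcp_nil_right]; exact Nat.zero_le _
    | cons b v =>
      rw [lcp_cons]
      split
      · simpa using Nat.succ_le_succ (ih v)
      · exact Nat.zero_le _

theorem lcp_getElem? : ∀ (u v : List Char) (i : ℕ), i < lcp u v → u[i]? = v[i]? := by
  intro u
  induction u with
  | nil => intro v i h; rw [lcp_nil_left] at h; omega
  | cons a u ih =>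
    intro v i h
    cases v with
    | nil => rw [lcp_nil_right] at h; omega
    | cons b v =>
      rw [lcp_cons] at h
      split at h
      · subst ‹a = b›
        cases i with
        | zero => simp
        | succ i => simpa using ih v i (by omega)
      · omega

theorem le_lcp : ∀ (u v : List Char) (n : ℕ), n ≤ u.length →
    (∀ i, i < n → u[i]? = v[i]?) → n ≤ lcp u v := by
  intro u
  induction u with
  | nil => intro v n hn _; simp at hn; omega
  | cons a u ih =>
    intro v n hn h
    cases n with
    | zero => exact Nat.zero_le _
    | succ n =>
      have h0 := h 0 (Nat.succ_pos n)
      cases v with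
      | nil => simp at h0
      | cons b v =>
        simp at h0
        rw [lcp_cons, if_pos h0]
        have := ih v n (by simpa using hn) (fun i hi => by
          have := h (i + 1) (by omega)
          simpa using this)
        omega

theorem lcp_append : ∀ (p u v : List Char), lcp (p ++ u) (p ++ v) = p.length + lcp u v := by
  intro p
  induction p with
  | nil => intro u v; simp
  | cons a p ih =>
    intro u v
    simp only [List.cons_append, lcp_cons, if_pos rfl, ih, List.length_cons, if_true]
    omega

theorem getElem?_take' (l : List Char) {n i : ℕ} (h : i < n) : (l.take n)[i]? = l[i]? := by
  rw [List.getElem?_take, if_pos h]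

theorem hasPer_take_small (w : List Char) {c : ℕ} (m : ℕ) (hc : 0 < c) (hm : m ≤ c) :
    hasPer (w.take m) c := by
  refine ⟨hc, fun q hq => ?_⟩
  have h1 : (w.take m).length ≤ m := by
    rw [List.length_take]; exact min_le_left _ _
  omega

theorem perR_mem (w : List Char) (c : ℕ) (hc : 0 < c) :
    perR w c ≤ w.length ∧ hasPer (w.take (perR w c)) c := by
  have : perR w c ∈ {r | r ≤ w.length ∧ hasPer (w.take r) c} := by
    apply Nat.sSup_mem
    · exact ⟨0, Nat.zero_le _, hasPer_take_small w 0 hc (Nat.zero_le _)⟩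
    · exact ⟨w.length, fun r hr => hr.1⟩
  exact this

theorem le_perR {w : List Char} {c r : ℕ} (h1 : r ≤ w.length)
    (h2 : hasPer (w.take r) c) : r ≤ perR w c :=
  le_csSup ⟨w.length, fun r hr => hr.1⟩ ⟨h1, h2⟩

theorem hasPer_take_iff {w : List Char} {c r : ℕ} (hc : 0 < c) (hr : r ≤ w.length) :
    hasPer (w.take r) c ↔ ∀ q, q + c < r → w[q]? = w[q + c]? := by
  have hl : (w.take r).length = r := by rw [List.length_take]; omega
  constructor
  · rintro ⟨-, h⟩ q hq
    have := h q (by omega)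
    rwa [getElem?_take' _ (by omega), getElem?_take' _ (by omega)] at this
  · intro h
    refine ⟨hc, fun q hq => ?_⟩
    rw [getElem?_take' _ (by omega), getElem?_take' _ (by omega)]
    exact h q (by omega)

theorem lcp_eq_of_lt {p u v : List Char} {c : ℕ} (hc : 0 < c) (hcp : c ≤ p.length)
    (hAB : perR (p ++ u) c < perR (p ++ v) c) :
    lcp (p ++ u) (p ++ v) = perR (p ++ u) c := by
  obtain ⟨hAle, hAper⟩ := perR_mem (p ++ u) c hc
  obtain ⟨hBle, hBper⟩ := perR_mem (p ++ v) c hc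
  have hAiff := (hasPer_take_iff hc hAle).mp hAper
  have hBiff := (hasPer_take_iff hc hBle).mp hBper
  have key : ∀ i, i < perR (p ++ u) c → (p ++ u)[i]? = (p ++ v)[i]? := by
    intro i
    induction i using Nat.strong_induction_on with
    | _ i ih =>
      intro hi
      by_cases h : i < c
      · have hip : i < p.length := lt_of_lt_of_le h hcp
        rw [List.getElem?_append, if_pos hip, List.getElem?_append, if_pos hip]
      · have h1 : (p ++ u)[i - c]? = (p ++ v)[i - c]? := ih (i - c) (by omega) (by omega)
        have h2 : (p ++ u)[i - c + c]? = (p ++ u)[i]? := by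
          rw [show i - c + c = i by omega]
        have h3 : (p ++ v)[i - c + c]? = (p ++ v)[i]? := by
          rw [show i - c + c = i by omega]
        rw [← h2, ← h3, ← hAiff (i - c) (by omega), ← hBiff (i - c) (by omega), h1]
  have hlow : perR (p ++ u) c ≤ lcp (p ++ u) (p ++ v) := le_lcp _ _ _ hAle key
  have hupper : lcp (p ++ u) (p ++ v) ≤ perR (p ++ u) c := by
    rcases Nat.lt_or_ge (perR (p ++ u) c) (p ++ u).length with hAlt | hAge
    · have hmin : min c (p ++ u).length ≤ perR (p ++ u) c :=
        le_perR (min_le_right _ _) (hasPer_take_small _ _ hc (min_le_left _ _))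
      have hAc : c ≤ perR (p ++ u) c := by omega
      have hnot : ¬ hasPer ((p ++ u).take (perR (p ++ u) c + 1)) c := fun hh => by
        have := le_perR (by omega) hh
        omega
      rw [hasPer_take_iff hc (by omega)] at hnot
      push_neg at hnot
      obtain ⟨q, hq1, hq2⟩ := hnot
      have hqA : q + c = perR (p ++ u) c := by
        by_contra hne
        exact hq2 (hAiff q (by omega))
      by_contra hlt
      push_neg at hlt
      have e1 : (p ++ u)[q]? = (p ++ v)[q]? := lcp_getElem? _ _ q (by omega)
      have e2 : (p ++ u)[q + c]? = (p ++ v)[q + c]? := lcp_getElem? _ _ (q + c) (by omega)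
      have e3 : (p ++ v)[q]? = (p ++ v)[q + c]? := hBiff q (by omega)
      exact hq2 (by rw [e1, e3, ← e2])
    · calc lcp (p ++ u) (p ++ v) ≤ (p ++ u).length := lcp_le_left _ _
        _ ≤ perR (p ++ u) c := hAge
  omega

theorem perR_drop {w : List Char} {c t : ℕ} (hc : 0 < c)
    (ht : t + c ≤ perR w c) : perR (w.drop t) c = perR w c - t := by
  obtain ⟨hAle, hAper⟩ := perR_mem w c hc
  have hAiff := (hasPer_take_iff hc hAle).mp hAper
  have hlen : (w.drop t).length = w.length - t := by simp
  apply le_antisymm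
  · obtain ⟨hBle, hBper⟩ := perR_mem (w.drop t) c hc
    have hBiff := (hasPer_take_iff hc hBle).mp hBper
    by_contra hgt
    push_neg at hgt
    have hnew : hasPer (w.take (t + perR (w.drop t) c)) c := by
      rw [hasPer_take_iff hc (by omega)]
      intro q hq
      rcases Nat.lt_or_ge q t with h | h
      · exact hAiff q (by omega)
      · have := hBiff (q - t) (by omega)
        rw [List.getElem?_drop, List.getElem?_drop] at this
        rw [show t + (q - t) = q by omega, show t + (q - t + c) = q + c by omega] at this
        exact this
    have := le_perR (by omega) hnew
    omega
  · apply le_perR (by omega)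
    rw [hasPer_take_iff hc (by omega)]
    intro q hq
    rw [List.getElem?_drop, List.getElem?_drop,
      show t + (q + c) = t + q + c by omega]
    exact hAiff (t + q) (by omega)

theorem stmt2 (s p x : List Char) (hp : p ≠ []) (hx : x ≠ [])
    (a₀ c k : ℕ) (hc : 0 < c) (hcp : c ≤ p.length)
    (hocc : ∀ j ≤ k, occursAt s p (a₀ + c * j))
    (hconsec : ∀ i, a₀ ≤ i → i ≤ a₀ + c * k → occursAt s p i → ∃ j ≤ k, i = a₀ + c * j)
    (z : ℕ → List Char) (hz : ∀ j, z j = s.drop (a₀ + c * j + p.length - 1))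
    (α β : ℤ)
    (hα : α = (perR (p ++ z 0) c : ℤ) - p.length)
    (hβ : β = (perR (p ++ x) c : ℤ) - p.length)
    (j : ℕ) (hj : j ≤ k) (hne : α - c * j ≠ β) :
    (lcp (z j) x : ℤ) = min (α - c * j) β := by
  subst hα hβ
  have hp1 : 1 ≤ p.length := List.length_pos_iff.mpr hp
  have ha1 : 1 ≤ a₀ := by have := (hocc 0 (Nat.zero_le k)).1; omega
  have hocc' : ∀ i ≤ k, (s.drop (a₀ + c * i - 1)).take p.length = p := by
    intro i hi
    obtain ⟨h1, h2, h3⟩ := hocc i hi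
    unfold sub at h3
    rwa [show a₀ + c * i + p.length - 1 - (a₀ + c * i) + 1 = p.length by omega] at h3
  have hslen : ∀ i ≤ k, a₀ + c * i + p.length ≤ s.length + 1 := fun i hi => (hocc i hi).2.1
  have hW : ∀ i ≤ k, p ++ z i = s.drop (a₀ + c * i - 1) := by
    intro i hi
    have h := List.take_append_drop p.length (s.drop (a₀ + c * i - 1))
    rw [hocc' i hi, List.drop_drop] at h
    rw [hz i, show a₀ + c * i + p.length - 1 = a₀ + c * i - 1 + p.length by omega]
    exact h
  have hW0 : p ++ z 0 = s.drop (a₀ - 1) := by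
    rw [hW 0 (Nat.zero_le k), show a₀ + c * 0 - 1 = a₀ - 1 by omega]
  -- lookups into p ++ z 0 at occurrence positions
  have hWi : ∀ i ≤ k, ∀ r < p.length, (p ++ z 0)[c * i + r]? = p[r]? := by
    intro i hi r hr
    rw [hW0, List.getElem?_drop, show a₀ - 1 + (c * i + r) = a₀ + c * i - 1 + r by omega,
      ← List.getElem?_drop, ← hW i hi, List.getElem?_append, if_pos hr]
  -- the key ℤ identity for perR (p ++ z j)
  have hAjZ : (perR (p ++ z j) c : ℤ) = (perR (p ++ z 0) c : ℤ) - (c * j : ℕ) := by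
    rcases Nat.eq_zero_or_pos j with hj0 | hj1
    · subst hj0
      simp
    · -- j ≥ 1
      have hlen0 : c * j + p.length ≤ (p ++ z 0).length := by
        rw [hW0, List.length_drop]
        have := hslen j hj
        omega
      have hper0 : ∀ q, q + c < c * j + p.length → (p ++ z 0)[q]? = (p ++ z 0)[q + c]? := by
        intro q hq
        have hdm := Nat.div_add_mod q c
        have hmlt : q % c < c := Nat.mod_lt q hc
        rcases le_total (q / c) (j - 1) with hcase | hcase
        · have hmul : c * (q / c + 1) = c * (q / c) + c := by ring
          rw [show q = c * (q / c) + q % c by omega,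
            show c * (q / c) + q % c + c = c * (q / c + 1) + q % c by omega,
            hWi (q / c) (by omega) (q % c) (by omega),
            hWi (q / c + 1) (by omega) (q % c) (by omega)]
        · have hcd : c * (j - 1) ≤ c * (q / c) := Nat.mul_le_mul_left c hcase
          have hjm : c * (j - 1) + c = c * j := by
            cases j with
            | zero => omega
            | succ n => simp [Nat.mul_succ]
          rw [show q = c * (j - 1) + (q - c * (j - 1)) by omega,
            show c * (j - 1) + (q - c * (j - 1)) + c = c * j + (q - c * (j - 1)) by omega,
            hWi (j - 1) (by omega) (q - c * (j - 1)) (by omega),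
            hWi j hj (q - c * (j - 1)) (by omega)]
      have hA0 : c * j + p.length ≤ perR (p ++ z 0) c :=
        le_perR hlen0 ((hasPer_take_iff hc hlen0).mpr hper0)
      have hdropped : p ++ z j = (p ++ z 0).drop (c * j) := by
        rw [hW j hj, hW0, List.drop_drop,
          show a₀ - 1 + c * j = a₀ + c * j - 1 by omega]
      rw [hdropped, perR_drop hc (by omega)]
      have : c * j ≤ perR (p ++ z 0) c := by omega
      omega
  -- A_j ≠ B
  have hneN : perR (p ++ z j) c ≠ perR (p ++ x) c := by
    intro he
    apply hne
    have h1 : (perR (p ++ z j) c : ℤ) = (perR (p ++ x) c : ℤ) := by exact_mod_cast he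
    rw [hAjZ] at h1
    push_cast at h1 ⊢
    linarith
  -- lcp = min
  have hlcp : lcp (p ++ z j) (p ++ x) = min (perR (p ++ z j) c) (perR (p ++ x) c) := by
    rcases lt_trichotomy (perR (p ++ z j) c) (perR (p ++ x) c) with h | h | h
    · rw [lcp_eq_of_lt hc hcp h, min_eq_left (le_of_lt h)]
    · exact absurd h hneN
    · rw [lcp_comm, lcp_eq_of_lt hc hcp h, min_eq_right (le_of_lt h)]
  have hsplit : lcp (p ++ z j) (p ++ x) = p.length + lcp (z j) x := lcp_append p (z j) x
  have key : (lcp (z j) x : ℤ) =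
      min ((perR (p ++ z j) c : ℤ)) ((perR (p ++ x) c : ℤ)) - p.length := by
    rw [← Nat.cast_min, ← hlcp, hsplit]
    push_cast
    ring
  have e : (perR (p ++ z 0) c : ℤ) - (p.length : ℤ) - (c : ℤ) * (j : ℤ)
      = (perR (p ++ z j) c : ℤ) - p.length := by
    push_cast at hAjZ
    linarith
  rw [e, min_sub_sub_right, key]
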